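/- Let W_min denote the minimum of w(B_1) over all 1-feasible partitions B_•. Suppose W_min > C_1 and B_• is a 1-feasible partition. Then for each i ≥ 2, the bin B_i contains some ball whose weight differs from w_1 (equivalently, n_1(B_i) < d). -/
import Mathlib


/-- A valid partition: `m i j` balls of weight `w i` in bin `j`, with `d` balls of each
weight and `d` balls in each bin. -/
def ValidPartition (n d : ℕ) (m : ℕ → ℕ → ℕ) : Prop :=
  (∀ i ∈ Finset.Icc 1 n, ∑ j ∈ Finset.Icc 1 n, m i j = d) ∧
  (∀ j ∈ Finset.Icc 1 n, ∑ i ∈ Finset.Icc 1 n, m i j = d)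

/-- Total weight of bin `j`. -/
def binWeight (n : ℕ) (w : ℕ → ℕ) (m : ℕ → ℕ → ℕ) (j : ℕ) : ℕ :=
  ∑ i ∈ Finset.Icc 1 n, m i j * w i

/-- 1-feasibility: the capacities of bins `2, …, n` are respected. -/
def OneFeasible (n d : ℕ) (w : ℕ → ℕ) (C : ℕ → ℤ) (m : ℕ → ℕ → ℕ) : Prop :=
  ValidPartition n d m ∧ ∀ j ∈ Finset.Icc 2 n, (binWeight n w m j : ℤ) ≤ C j

/-- Lemma 2.4: if every 1-feasible partition has `w(B_1) > C_1`
(i.e. `W_min > C_1`) and `B_•` is 1-feasible, then for each `i ≥ 2` the bin `B_i`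
contains a ball of weight different from `w_1`. -/
theorem bin_not_only_top_weight
    (n d : ℕ) (hn : 1 ≤ n) (hd : 1 ≤ d)
    (w : ℕ → ℕ) (C : ℕ → ℤ)
    (hw : ∀ i, 1 ≤ i → i < n → w (i + 1) ≤ w i)
    (hC : ∀ i, 1 ≤ i → i < n → C (i + 1) ≤ C i)
    (hWmin : ∀ m' : ℕ → ℕ → ℕ, OneFeasible n d w C m' →
      (C 1 < (binWeight n w m' 1 : ℤ)))
    (m : ℕ → ℕ → ℕ) (hm : OneFeasible n d w C m) :
    ∀ i ∈ Finset.Icc 2 n, ∃ i' ∈ Finset.Icc 1 n, w i' ≠ w 1 ∧ 0 < m i' i := by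
  intro i hi
  have hi' := hi
  simp only [Finset.mem_Icc] at hi'
  obtain ⟨hi2, hin⟩ := hi'
  by_contra hcon
  push_neg at hcon
  have hi1 : 1 ≤ i := by omega
  have hine : i ≠ 1 := by omega
  have hmemi : i ∈ Finset.Icc 1 n := Finset.mem_Icc.mpr ⟨hi1, hin⟩
  have hmem1 : (1 : ℕ) ∈ Finset.Icc 1 n := Finset.mem_Icc.mpr ⟨le_refl 1, hn⟩
  have hwle : ∀ k, 1 ≤ k → k ≤ n → w k ≤ w 1 := by
    intro k
    induction k with
    | zero => omega
    | succ k ih =>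
      intro _ hk
      by_cases hk0 : k = 0
      · subst hk0; exact le_refl _
      · have hk1 : 1 ≤ k := by omega
        exact le_trans (hw k hk1 (by omega)) (ih hk1 (by omega))
  have hCle : ∀ k, 1 ≤ k → k ≤ n → C k ≤ C 1 := by
    intro k
    induction k with
    | zero => omega
    | succ k ih =>
      intro _ hk
      by_cases hk0 : k = 0
      · subst hk0; exact le_refl _
      · have hk1 : 1 ≤ k := by omega
        exact le_trans (hC k hk1 (by omega)) (ih hk1 (by omega))
  obtain ⟨⟨hrow, hcol⟩, hfeas⟩ := hm
  have hbini : binWeight n w m i = d * w 1 := by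
    unfold binWeight
    calc ∑ k ∈ Finset.Icc 1 n, m k i * w k
        = ∑ k ∈ Finset.Icc 1 n, m k i * w 1 := by
          apply Finset.sum_congr rfl
          intro k hk
          by_cases hwk : w k = w 1
          · rw [hwk]
          · have h0 := hcon k hk hwk
            have : m k i = 0 := by omega
            simp [this]
      _ = (∑ k ∈ Finset.Icc 1 n, m k i) * w 1 := (Finset.sum_mul ..).symm
      _ = d * w 1 := by rw [hcol i hmemi]
  have hbin1le : binWeight n w m 1 ≤ d * w 1 := by
    unfold binWeight
    calc ∑ k ∈ Finset.Icc 1 n, m k 1 * w k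
        ≤ ∑ k ∈ Finset.Icc 1 n, m k 1 * w 1 := by
          apply Finset.sum_le_sum
          intro k hk
          have hk' := Finset.mem_Icc.mp hk
          exact Nat.mul_le_mul_left _ (hwle k hk'.1 hk'.2)
      _ = (∑ k ∈ Finset.Icc 1 n, m k 1) * w 1 := (Finset.sum_mul ..).symm
      _ = d * w 1 := by rw [hcol 1 hmem1]
  set σ := Equiv.swap 1 i with hσ
  have hσmem : ∀ j, j ∈ Finset.Icc 1 n → σ j ∈ Finset.Icc 1 n := by
    intro j hj
    rcases eq_or_ne j 1 with h | h
    · subst h; simpa [hσ, Equiv.swap_apply_left] using hmemi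
    rcases eq_or_ne j i with h' | h'
    · subst h'; simpa [hσ, Equiv.swap_apply_right] using hmem1
    · rw [hσ, Equiv.swap_apply_of_ne_of_ne h h']; exact hj
  have hσiff : ∀ j, j ∈ Finset.Icc 1 n ↔ σ j ∈ Finset.Icc 1 n := by
    intro j
    constructor
    · exact hσmem j
    · intro h
      have := hσmem (σ j) h
      simpa [hσ, Equiv.swap_apply_self] using this
  have hsum : ∀ f : ℕ → ℕ, ∑ j ∈ Finset.Icc 1 n, f (σ j) = ∑ j ∈ Finset.Icc 1 n, f j := by
    intro f
    exact Finset.sum_equiv σ hσiff (fun j _ => rfl)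
  set m' : ℕ → ℕ → ℕ := fun a b => m a (σ b) with hm'
  have hbw : ∀ j, binWeight n w m' j = binWeight n w m (σ j) := fun j => rfl
  have hfeas' : OneFeasible n d w C m' := by
    refine ⟨⟨?_, ?_⟩, ?_⟩
    · intro a ha
      calc ∑ j ∈ Finset.Icc 1 n, m' a j = ∑ j ∈ Finset.Icc 1 n, m a j := hsum (m a)
        _ = d := hrow a ha
    · intro j hj
      exact hcol (σ j) (hσmem j hj)
    · intro b hb
      rw [hbw]
      have hb' := Finset.mem_Icc.mp hb
      rcases eq_or_ne b i with h | h
      · rw [h, hσ, Equiv.swap_apply_right]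
        calc (binWeight n w m 1 : ℤ) ≤ (d * w 1 : ℕ) := by exact_mod_cast hbin1le
          _ = (binWeight n w m i : ℤ) := by rw [hbini]
          _ ≤ C i := hfeas i hi
      · have hb1 : b ≠ 1 := by omega
        rw [hσ, Equiv.swap_apply_of_ne_of_ne hb1 h]
        exact hfeas b hb
  have hlt := hWmin m' hfeas'
  rw [hbw, hσ, Equiv.swap_apply_left, hbini] at hlt
  have hle : ((d * w 1 : ℕ) : ℤ) ≤ C 1 := by
    calc ((d * w 1 : ℕ) : ℤ) = (binWeight n w m i : ℤ) := by rw [hbini]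
      _ ≤ C i := hfeas i hi
      _ ≤ C 1 := hCle i hi1 hin
  omega
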